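/- For every n ≥ 0, every m with 0 ≤ m ≤ n, and every k ≥ 0, the number of Dyck paths of semilength n with exactly m flaws and exactly k peaks equals the number of Dyck paths of semilength n with exactly n−m flaws and exactly k valleys; that is, p_{n,m,k} = v_{n,n−m,k}. (The bijection sends each step to its opposite step.) -/

import Mathlib

/-- The height of a path (list of steps; `true` = up step `U`, `false` = down step `D`)
after all its steps: #U − #D. -/
def height (l : List Bool) : ℤ := (l.count true : ℤ) - (l.count false : ℤ)

/-- `l` is a Dyck path of semilength `n`: `2n` steps ending at height `0`
(equivalently, exactly `n` up steps). It may go below the x-axis. -/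
def IsDyck (n : ℕ) (l : List Bool) : Prop := l.length = 2 * n ∧ l.count true = n

/-- The number of flaws: up steps starting at negative height. -/
def flaws (l : List Bool) : ℕ :=
  ((Finset.range l.length).filter
    (fun i => l.getD i false = true ∧ height (l.take i) < 0)).card

/-- The number of peaks: positions where an up step is immediately followed by a down step. -/
def peaks (l : List Bool) : ℕ :=
  ((Finset.range (l.length - 1)).filter
    (fun i => l.getD i false = true ∧ l.getD (i + 1) false = false)).card

/-- The number of valleys: positions where a down step is immediately followed by an up step. -/
def valleys (l : List Bool) : ℕ :=
  ((Finset.range (l.length - 1)).filter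
    (fun i => l.getD i false = false ∧ l.getD (i + 1) false = true)).card

/-- The number of double ascents: positions of two consecutive up steps. -/
def dascents (l : List Bool) : ℕ :=
  ((Finset.range (l.length - 1)).filter
    (fun i => l.getD i false = true ∧ l.getD (i + 1) false = true)).card

/-- The number of double descents: positions of two consecutive down steps. -/
def ddescents (l : List Bool) : ℕ :=
  ((Finset.range (l.length - 1)).filter
    (fun i => l.getD i false = false ∧ l.getD (i + 1) false = false)).card

/-- `p n m k`: the number of Dyck paths of semilength `n` with `m` flaws and `k` peaks. -/
noncomputable def p (n m k : ℕ) : ℕ :=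
  Nat.card {l : List Bool // IsDyck n l ∧ flaws l = m ∧ peaks l = k}

/-- `v n m k`: the number of Dyck paths of semilength `n` with `m` flaws and `k` valleys. -/
noncomputable def v (n m k : ℕ) : ℕ :=
  Nat.card {l : List Bool // IsDyck n l ∧ flaws l = m ∧ valleys l = k}

/-- `a n m k`: the number of Dyck paths of semilength `n` with `m` flaws and `k` double ascents. -/
noncomputable def a (n m k : ℕ) : ℕ :=
  Nat.card {l : List Bool // IsDyck n l ∧ flaws l = m ∧ dascents l = k}

/-- `d n m k`: the number of Dyck paths of semilength `n` with `m` flaws and `k` double descents. -/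
noncomputable def d (n m k : ℕ) : ℕ :=
  Nat.card {l : List Bool // IsDyck n l ∧ flaws l = m ∧ ddescents l = k}

/-- Anti-flaws: down steps starting at positive height. -/
def aflaws (l : List Bool) : ℕ :=
  ((Finset.range l.length).filter
    (fun i => l.getD i false = false ∧ 0 < height (l.take i))).card

lemma count_bool (l : List Bool) : l.count true + l.count false = l.length := by
  induction l with
  | nil => simp
  | cons b t ih => cases b <;> simp [List.count_cons] <;> omega

lemma height_concat (l : List Bool) (s : Bool) :
    height (l ++ [s]) = height l + (if s then 1 else -1) := by
  cases s <;> simp [height, List.count_append] <;> ring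

lemma getD_concat (l : List Bool) (s : Bool) (i : ℕ) (h : i < l.length) :
    (l ++ [s]).getD i false = l.getD i false := by
  rw [List.getD_eq_getElem _ _ (by simp; omega), List.getD_eq_getElem _ _ h,
    List.getElem_append_left h]

lemma getD_concat_last (l : List Bool) (s : Bool) :
    (l ++ [s]).getD l.length false = s := by simp [List.getD]

lemma flaws_concat (l : List Bool) (s : Bool) :
    flaws (l ++ [s]) = flaws l + (if s = true ∧ height l < 0 then 1 else 0) := by
  unfold flaws
  have hlen : (l ++ [s]).length = l.length + 1 := by simp
  rw [hlen, Finset.range_add_one, Finset.filter_insert]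
  have hrest : (Finset.range l.length).filter
      (fun i => (l ++ [s]).getD i false = true ∧ height ((l ++ [s]).take i) < 0)
      = (Finset.range l.length).filter
      (fun i => l.getD i false = true ∧ height (l.take i) < 0) := by
    apply Finset.filter_congr
    intro i hi
    rw [Finset.mem_range] at hi
    rw [getD_concat l s i hi, List.take_append_of_le_length hi.le]
  rw [hrest, getD_concat_last, List.take_left (l₁ := l) (l₂ := [s])]
  split_ifs with h
  · rw [Finset.card_insert_of_notMem (by simp)]
  · simp

lemma aflaws_concat (l : List Bool) (s : Bool) :
    aflaws (l ++ [s]) = aflaws l + (if s = false ∧ 0 < height l then 1 else 0) := by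
  unfold aflaws
  have hlen : (l ++ [s]).length = l.length + 1 := by simp
  rw [hlen, Finset.range_add_one, Finset.filter_insert]
  have hrest : (Finset.range l.length).filter
      (fun i => (l ++ [s]).getD i false = false ∧ 0 < height ((l ++ [s]).take i))
      = (Finset.range l.length).filter
      (fun i => l.getD i false = false ∧ 0 < height (l.take i)) := by
    apply Finset.filter_congr
    intro i hi
    rw [Finset.mem_range] at hi
    rw [getD_concat l s i hi, List.take_append_of_le_length hi.le]
  rw [hrest, getD_concat_last, List.take_left (l₁ := l) (l₂ := [s])]
  split_ifs with h
  · rw [Finset.card_insert_of_notMem (by simp)]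
  · simp

lemma key (l : List Bool) :
    (flaws l : ℤ) + aflaws l = l.count false + min (height l) 0 := by
  induction l using List.reverseRecOn with
  | nil => simp [flaws, aflaws, height]
  | append_singleton l s ih =>
    rw [flaws_concat, aflaws_concat, height_concat]
    have hc : (l ++ [s]).count false = l.count false + (if s = false then 1 else 0) := by
      cases s <;> simp [List.count_append]
    rw [hc]
    cases s <;> simp only [Bool.false_eq_true, Bool.true_eq_false, true_and, false_and,
      and_true, and_false, if_true, if_false] <;> push_cast <;> split_ifs <;> omega

lemma count_true_map_not (l : List Bool) : (l.map not).count true = l.count false := by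
  induction l with
  | nil => simp
  | cons b t ih => cases b <;> simp [List.count_cons, ih]

lemma count_false_map_not (l : List Bool) : (l.map not).count false = l.count true := by
  induction l with
  | nil => simp
  | cons b t ih => cases b <;> simp [List.count_cons, ih]

lemma height_map_not (l : List Bool) : height (l.map not) = - height l := by
  simp [height, count_true_map_not, count_false_map_not]

lemma getD_map_not (l : List Bool) (i : ℕ) (h : i < l.length) :
    (l.map not).getD i false = !(l.getD i false) := by
  rw [List.getD_eq_getElem _ _ (by simpa), List.getD_eq_getElem _ _ h, List.getElem_map]

lemma flaws_map_not (l : List Bool) : flaws (l.map not) = aflaws l := by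
  unfold flaws aflaws
  rw [List.length_map]
  congr 1
  apply Finset.filter_congr
  intro i hi
  rw [Finset.mem_range] at hi
  rw [getD_map_not l i hi, ← List.map_take, height_map_not]
  constructor <;> rintro ⟨h1, h2⟩
  · exact ⟨by simpa using h1, by omega⟩
  · exact ⟨by rw [h1]; rfl, by omega⟩

lemma valleys_map_not (l : List Bool) : valleys (l.map not) = peaks l := by
  unfold valleys peaks
  rw [List.length_map]
  congr 1
  apply Finset.filter_congr
  intro i hi
  rw [Finset.mem_range] at hi
  have h1 : i < l.length := by omega
  have h2 : i + 1 < l.length := by omega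
  rw [getD_map_not l i h1, getD_map_not l (i+1) h2]
  constructor <;> rintro ⟨ha, hb⟩
  · exact ⟨by simpa using ha, by simpa using hb⟩
  · exact ⟨by rw [ha]; rfl, by rw [hb]; rfl⟩

lemma map_not_map_not (l : List Bool) : (l.map not).map not = l := by
  simp [List.map_map, Function.comp_def, Bool.not_not]

lemma dyck_map_not {n : ℕ} {l : List Bool} (h : IsDyck n l) : IsDyck n (l.map not) := by
  obtain ⟨h1, h2⟩ := h
  refine ⟨by simpa using h1, ?_⟩
  rw [count_true_map_not]
  have := count_bool l
  omega

lemma dyck_flaws {n : ℕ} {l : List Bool} (h : IsDyck n l) :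
    flaws l ≤ n ∧ flaws (l.map not) = n - flaws l := by
  obtain ⟨h1, h2⟩ := h
  have hcf : l.count false = n := by have := count_bool l; omega
  have hh : height l = 0 := by simp [height, h2, hcf]
  have hk := key l
  rw [hh, hcf] at hk
  simp only [min_self, add_zero] at hk
  rw [flaws_map_not]
  omega

/-- `p_{n,m,k} = v_{n,n-m,k}` (via the step-complementation bijection). -/
theorem peak_valley_flip (n m k : ℕ) (hm : m ≤ n) : p n m k = v n (n - m) k := by
  apply Nat.card_congr
  refine ⟨fun x => ⟨x.1.map not, ?_⟩, fun x => ⟨x.1.map not, ?_⟩, fun x => ?_, fun x => ?_⟩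
  · obtain ⟨hd, hf, hp⟩ := x.2
    refine ⟨dyck_map_not hd, ?_, ?_⟩
    · rw [(dyck_flaws hd).2, hf]
    · rw [valleys_map_not, hp]
  · obtain ⟨hd, hf, hv⟩ := x.2
    have hle := (dyck_flaws hd).1
    refine ⟨dyck_map_not hd, ?_, ?_⟩
    · rw [(dyck_flaws hd).2, hf]; omega
    · have := valleys_map_not (x.1.map not)
      rw [map_not_map_not] at this
      rw [← this, hv]
  · exact Subtype.ext (map_not_map_not x.1)
  · exact Subtype.ext (map_not_map_not x.1)
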